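/- Let X be a nonempty finite type and let μ, ν be probability mass functions on X such that ν(x) > 0 whenever μ(x) > 0. Let g(x) = μ(x)/ν(x) for x with ν(x) > 0 (and g(x) = 0 otherwise), let V = Σ_{x : ν(x)>0} μ(x)²/ν(x) and B = max_{x : ν(x)>0} μ(x)/ν(x). Let Y₁,…,Y_m be m i.i.d. samples from ν and let 0 < α ≤ 1. Then Pr[ |Σ_{i=1}^m g(Y_i) − m| ≥ (α/4)·m ] ≤ 2·exp( −α²·m / (32·(V − 1) + (8/3)·α·B) ). -/

import Mathlib

open MeasureTheory

/-- `e^{D₂(μ‖ν)} = Σ_{x : ν(x)>0} μ(x)²/ν(x)`. -/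
noncomputable def expD2 {X : Type*} [Fintype X] (μ ν : PMF X) : ℝ :=
  ∑ x ∈ Finset.univ.filter (fun x => ν x ≠ 0), ((μ x).toReal) ^ 2 / (ν x).toReal

/-- `e^{D∞(μ‖ν)} = max_{x : ν(x)>0} μ(x)/ν(x)`. -/
noncomputable def expDinf {X : Type*} (μ ν : PMF X) : ℝ :=
  sSup ((fun x => (μ x).toReal / (ν x).toReal) '' {x | ν x ≠ 0})

private lemma nonneg_on_Ici {f f' : ℝ → ℝ} (hf : ∀ x, HasDerivAt f (f' x) x)
    (h0 : f 0 = 0) (hf' : ∀ x, 0 ≤ x → 0 ≤ f' x) : ∀ x, 0 ≤ x → 0 ≤ f x := by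
  intro x hx
  have hmono : MonotoneOn f (Set.Ici (0:ℝ)) :=
    monotoneOn_of_deriv_nonneg (convex_Ici 0)
      (fun y _ => (hf y).continuousAt.continuousWithinAt)
      (fun y hy => (hf y).differentiableAt.differentiableWithinAt)
      (fun y hy => by
        rw [(hf y).deriv]
        exact hf' y (le_of_lt (by simpa [interior_Ici] using hy)))
  simpa [h0] using hmono (Set.self_mem_Ici) hx hx

private lemma exp_quad_neg {x : ℝ} (hx : x ≤ 0) : Real.exp x ≤ 1 + x + x ^ 2 / 2 := by
  have hf : ∀ y : ℝ, HasDerivAt (fun z => 1 + z + z ^ 2 / 2 - Real.exp z)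
      (1 + y - Real.exp y) y := by
    intro y
    have h1 : HasDerivAt (fun z : ℝ => 1 + z + z ^ 2 / 2 - Real.exp z)
        (0 + 1 + (2 * y ^ 1) / 2 - Real.exp y) y :=
      (((hasDerivAt_const y (1:ℝ)).add (hasDerivAt_id' y)).add
        ((hasDerivAt_pow 2 y).div_const 2)).sub (Real.hasDerivAt_exp y)
    convert h1 using 1; ring
  have hanti : AntitoneOn (fun z : ℝ => 1 + z + z ^ 2 / 2 - Real.exp z) (Set.Iic (0:ℝ)) :=
    antitoneOn_of_deriv_nonpos (convex_Iic 0)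
      (fun y _ => (hf y).continuousAt.continuousWithinAt)
      (fun y hy => (hf y).differentiableAt.differentiableWithinAt)
      (fun y _ => by
        rw [(hf y).deriv]
        nlinarith [Real.add_one_le_exp y])
  have := hanti (Set.mem_Iic.mpr hx) (Set.self_mem_Iic) hx
  simp only [Real.exp_zero] at this
  nlinarith [this]

private lemma exp_quad_pos {x : ℝ} (hx : 0 ≤ x) :
    (1 - x / 3) * (Real.exp x - 1 - x) ≤ x ^ 2 / 2 := by
  have hg1 : ∀ y : ℝ, 0 ≤ y → 0 ≤ 1 + (y - 1) * Real.exp y := by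
    refine nonneg_on_Ici (f' := fun y => y * Real.exp y) (fun y => ?_) (by simp) ?_
    · have h1 : HasDerivAt (fun z : ℝ => 1 + (z - 1) * Real.exp z)
          (0 + (1 * Real.exp y + (y - 1) * Real.exp y)) y :=
        (hasDerivAt_const y (1:ℝ)).add
          (((hasDerivAt_id' y).sub_const 1).mul (Real.hasDerivAt_exp y))
      convert h1 using 1; ring
    · intro y hy; positivity
  have hg0 : ∀ y : ℝ, 0 ≤ y → 0 ≤ y + 2 + (y - 2) * Real.exp y := by
    refine nonneg_on_Ici (f' := fun y => 1 + (y - 1) * Real.exp y) (fun y => ?_) (by norm_num) hg1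
    have h1 : HasDerivAt (fun z : ℝ => z + 2 + (z - 2) * Real.exp z)
        (1 + (1 * Real.exp y + (y - 2) * Real.exp y)) y :=
      ((hasDerivAt_id' y).add_const 2).add
        (((hasDerivAt_id' y).sub_const 2).mul (Real.hasDerivAt_exp y))
    convert h1 using 1; ring
  have hf : ∀ y : ℝ, 0 ≤ y →
      0 ≤ y ^ 2 / 2 - (1 - y / 3) * (Real.exp y - 1 - y) := by
    refine nonneg_on_Ici (f' := fun y => (y + 2 + (y - 2) * Real.exp y) / 3) (fun y => ?_)
      (by norm_num) (fun y hy => div_nonneg (hg0 y hy) (by norm_num))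
    have h1 : HasDerivAt (fun z : ℝ => z ^ 2 / 2 - (1 - z / 3) * (Real.exp z - 1 - z))
        ((2 * y ^ 1) / 2 - ((0 - 1 / 3) * (Real.exp y - 1 - y)
          + (1 - y / 3) * (Real.exp y - 1))) y := by
      refine ((hasDerivAt_pow 2 y).div_const 2).sub (HasDerivAt.mul ?_ ?_)
      · exact (hasDerivAt_const y (1:ℝ)).sub ((hasDerivAt_id' y).div_const 3)
      · exact ((Real.hasDerivAt_exp y).sub_const 1).sub (hasDerivAt_id' y)
    convert h1 using 1; ring
  linarith [hf x hx]

private lemma exp_pointwise {x u : ℝ} (hx : |x| ≤ u) (hu : u < 3) :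
    Real.exp x ≤ 1 + x + x ^ 2 / (2 * (1 - u / 3)) := by
  have h0 : 0 ≤ Real.exp x - 1 - x := by nlinarith [Real.add_one_le_exp x]
  have hc : 0 < 1 - u / 3 := by linarith
  have habs : (1 - |x| / 3) * (Real.exp x - 1 - x) ≤ x ^ 2 / 2 := by
    rcases le_or_gt 0 x with h | h
    · rw [abs_of_nonneg h]; exact exp_quad_pos h
    · rw [abs_of_neg h]
      have h1 : (1 - -x / 3) * (Real.exp x - 1 - x) ≤ 1 * (Real.exp x - 1 - x) := by
        apply mul_le_mul_of_nonneg_right _ h0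
        linarith
      have h2 := exp_quad_neg h.le
      nlinarith
  have hle : (1 - u / 3) * (Real.exp x - 1 - x) ≤ x ^ 2 / 2 := by
    have : (1 - u / 3) * (Real.exp x - 1 - x) ≤ (1 - |x| / 3) * (Real.exp x - 1 - x) := by
      apply mul_le_mul_of_nonneg_right _ h0
      have := abs_nonneg x
      linarith
    linarith
  have h2 : Real.exp x - 1 - x ≤ x ^ 2 / (2 * (1 - u / 3)) := by
    rw [le_div_iff₀ (by positivity)]
    nlinarith [hle]
  linarith


private lemma mgf_bound {X : Type*} [Fintype X] (p Z : X → ℝ) (B s2 l : ℝ)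
    (hp : ∀ x, 0 ≤ p x) (hps : ∑ x, p x = 1)
    (hZ : ∀ x, |Z x| ≤ B) (hZ1 : ∑ x, p x * Z x = 0) (hZ2 : ∑ x, p x * Z x ^ 2 = s2)
    (hl : 0 ≤ l) (hu : l * B < 3) :
    ∑ x, p x * Real.exp (l * Z x) ≤ Real.exp (l ^ 2 * s2 / (2 * (1 - l * B / 3))) := by
  have hc : 0 < 1 - l * B / 3 := by linarith
  have key : ∀ x, Real.exp (l * Z x) ≤ 1 + l * Z x + (l * Z x) ^ 2 / (2 * (1 - l * B / 3)) := by
    intro x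
    refine exp_pointwise ?_ hu
    rw [abs_mul, abs_of_nonneg hl]
    exact mul_le_mul_of_nonneg_left (hZ x) hl
  calc ∑ x, p x * Real.exp (l * Z x)
      ≤ ∑ x, (p x + l * (p x * Z x) + (l ^ 2 / (2 * (1 - l * B / 3))) * (p x * Z x ^ 2)) := by
        refine Finset.sum_le_sum fun x _ => ?_
        have := mul_le_mul_of_nonneg_left (key x) (hp x)
        calc p x * Real.exp (l * Z x) ≤ p x * (1 + l * Z x + (l * Z x) ^ 2 / (2 * (1 - l * B / 3))) := this
          _ = p x + l * (p x * Z x) + (l ^ 2 / (2 * (1 - l * B / 3))) * (p x * Z x ^ 2) := by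
            field_simp
    _ = 1 + l ^ 2 * s2 / (2 * (1 - l * B / 3)) := by
        rw [Finset.sum_add_distrib, Finset.sum_add_distrib, ← Finset.mul_sum, ← Finset.mul_sum,
          hps, hZ1, hZ2]
        ring
    _ ≤ Real.exp (l ^ 2 * s2 / (2 * (1 - l * B / 3))) := by
        have := Real.add_one_le_exp (l ^ 2 * s2 / (2 * (1 - l * B / 3)))
        linarith

private lemma chernoff {X : Type*} [Fintype X] (m : ℕ) (p Z : X → ℝ) (hp : ∀ x, 0 ≤ p x)
    (t l : ℝ) (hl : 0 ≤ l) [DecidablePred fun y : Fin m → X => t ≤ ∑ i, Z (y i)] :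
    ∑ y ∈ Finset.univ.filter (fun y : Fin m → X => t ≤ ∑ i, Z (y i)), ∏ i, p (y i)
      ≤ Real.exp (-(l * t)) * (∑ x, p x * Real.exp (l * Z x)) ^ m := by
  classical
  have hterm : ∀ y : Fin m → X,
      (∏ i, p (y i)) * Real.exp (l * (∑ i, Z (y i)) - l * t)
        = Real.exp (-(l * t)) * ∏ i, (p (y i) * Real.exp (l * Z (y i))) := by
    intro y
    have h2 : Real.exp (l * ∑ i, Z (y i)) = ∏ i, Real.exp (l * Z (y i)) := by
      rw [← Real.exp_sum, Finset.mul_sum]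
    rw [Real.exp_sub, Finset.prod_mul_distrib, h2, Real.exp_neg]
    field_simp
  calc ∑ y ∈ Finset.univ.filter (fun y : Fin m → X => t ≤ ∑ i, Z (y i)), ∏ i, p (y i)
      ≤ ∑ y ∈ Finset.univ.filter (fun y : Fin m → X => t ≤ ∑ i, Z (y i)),
          (∏ i, p (y i)) * Real.exp (l * (∑ i, Z (y i)) - l * t) := by
        refine Finset.sum_le_sum fun y hy => ?_
        have hy' : t ≤ ∑ i, Z (y i) := (Finset.mem_filter.mp hy).2
        have h1 : (1:ℝ) ≤ Real.exp (l * (∑ i, Z (y i)) - l * t) := by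
          rw [← Real.exp_zero]
          apply Real.exp_le_exp.mpr
          nlinarith
        have h0 : 0 ≤ ∏ i, p (y i) := Finset.prod_nonneg fun i _ => hp (y i)
        nlinarith
    _ ≤ ∑ y : Fin m → X, (∏ i, p (y i)) * Real.exp (l * (∑ i, Z (y i)) - l * t) := by
        refine Finset.sum_le_sum_of_subset_of_nonneg (Finset.filter_subset _ _) fun y _ _ => ?_
        exact mul_nonneg (Finset.prod_nonneg fun i _ => hp (y i)) (Real.exp_nonneg _)
    _ = Real.exp (-(l * t)) * ∑ y : Fin m → X, ∏ i, (p (y i) * Real.exp (l * Z (y i))) := by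
        rw [Finset.mul_sum]
        exact Finset.sum_congr rfl fun y _ => hterm y
    _ = Real.exp (-(l * t)) * (∑ x, p x * Real.exp (l * Z x)) ^ m := by
        congr 1
        rw [← Fintype.piFinset_univ, ← Finset.prod_univ_sum (fun _ : Fin m => Finset.univ)
          (fun _ x => p x * Real.exp (l * Z x))]
        simp [Finset.prod_const]

private lemma measure_pi_eq {X : Type*} [Fintype X] [MeasurableSpace X]
    [MeasurableSingletonClass X] (ν : PMF X) (m : ℕ) (S : Set (Fin m → X))
    [DecidablePred (· ∈ S)] :
    (Measure.pi fun _ : Fin m => ν.toMeasure) S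
      = ∑ y ∈ Finset.univ.filter (· ∈ S), ∏ i, ν (y i) := by
  have hsing : ∀ y : Fin m → X,
      (Measure.pi fun _ : Fin m => ν.toMeasure) {y} = ∏ i, ν (y i) := by
    intro y
    have h1 : ({y} : Set (Fin m → X)) = Set.univ.pi (fun i => {y i}) := by
      ext z
      simp [Set.mem_pi, funext_iff]
    rw [h1, Measure.pi_pi]
    exact Finset.prod_congr rfl fun i _ =>
      PMF.toMeasure_apply_singleton ν (y i) (measurableSet_singleton _)
  have hS : S = ↑(Finset.univ.filter (· ∈ S)) := by ext z; simp
  rw [show (Measure.pi fun _ : Fin m => ν.toMeasure) S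
      = (Measure.pi fun _ : Fin m => ν.toMeasure) ↑(Finset.univ.filter (· ∈ S)) from
    congrArg _ hS]
  have h2 : (Measure.pi fun _ : Fin m => ν.toMeasure) ↑(Finset.univ.filter (· ∈ S))
      = ∑ y ∈ Finset.univ.filter (· ∈ S),
          (Measure.pi fun _ : Fin m => ν.toMeasure) {y} := by
    set s := Finset.univ.filter (· ∈ S)
    have h := measure_biUnion_finset (μ := Measure.pi fun _ : Fin m => ν.toMeasure)
      (s := s) (f := fun y => ({y} : Set (Fin m → X))) ?_
      (fun b _ => measurableSet_singleton b)
    · rw [← h]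
      congr 1
      ext z; simp
    · intro x _ y _ hxy
      simp [Function.onFun, Set.disjoint_singleton, hxy]
  rw [h2]
  exact Finset.sum_congr rfl fun y _ => hsing y

open MeasureTheory

set_option maxHeartbeats 1000000 in
/-- Bernstein-type bound for the total importance weight: with `g(x) = μ(x)/ν(x)` (`0` when
`ν(x) = 0`), `V = e^{D₂(μ‖ν)}` and `B = e^{D∞(μ‖ν)}`, for `m` i.i.d. samples from `ν`,
`Pr[|Σᵢ g(Yᵢ) − m| ≥ (α/4)·m] ≤ 2·exp(−α²m/(32(V−1) + (8/3)αB))`. -/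
theorem importance_weight_concentration {X : Type*} [Fintype X] [Nonempty X]
    [MeasurableSpace X] [MeasurableSingletonClass X]
    (μ ν : PMF X) (habs : ∀ x, μ x ≠ 0 → ν x ≠ 0)
    (m : ℕ) (α : ℝ) (hα0 : 0 < α) (hα1 : α ≤ 1) :
    (Measure.pi fun _ : Fin m => ν.toMeasure)
        {Y : Fin m → X | α / 4 * m ≤
          |(∑ i, (μ (Y i)).toReal / (ν (Y i)).toReal) - m|}
      ≤ ENNReal.ofReal (2 * Real.exp
          (-(α ^ 2 * m) / (32 * (expD2 μ ν - 1) + 8 / 3 * α * expDinf μ ν))) := by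
  classical
  set g : X → ℝ := fun x => (μ x).toReal / (ν x).toReal with hgdef
  set p : X → ℝ := fun x => (ν x).toReal with hpdef
  set B := expDinf μ ν with hBdef
  set V := expD2 μ ν with hVdef
  set s2 := V - 1 with hs2def
  have hp : ∀ x, 0 ≤ p x := fun x => ENNReal.toReal_nonneg
  have hps : ∑ x, p x = 1 := by
    have h := ν.tsum_coe
    rw [tsum_fintype] at h
    have h2 := congrArg ENNReal.toReal h
    rwa [ENNReal.toReal_sum (fun x _ => PMF.apply_ne_top ν x), ENNReal.toReal_one] at h2
  have hqs : ∑ x, (μ x).toReal = 1 := by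
    have h := μ.tsum_coe
    rw [tsum_fintype] at h
    have h2 := congrArg ENNReal.toReal h
    rwa [ENNReal.toReal_sum (fun x _ => PMF.apply_ne_top μ x), ENNReal.toReal_one] at h2
  have hpne : ∀ x, ν x ≠ 0 → p x ≠ 0 := by
    intro x hx
    simp only [hpdef, ne_eq, ENNReal.toReal_eq_zero_iff]
    push_neg
    exact ⟨hx, PMF.apply_ne_top ν x⟩
  have hpg : ∀ x, p x * g x = (μ x).toReal := by
    intro x
    by_cases hx : ν x = 0
    · have hμ : μ x = 0 := by
        by_contra h
        exact habs x h hx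
      simp [hgdef, hpdef, hx, hμ]
    · have := hpne x hx
      simp only [hgdef, hpdef] at *
      field_simp
  have hEg : ∑ x, p x * g x = 1 := by
    rw [Finset.sum_congr rfl (fun x _ => hpg x)]
    exact hqs
  have hEg2 : ∑ x, p x * g x ^ 2 = V := by
    rw [hVdef, expD2, Finset.sum_filter]
    refine Finset.sum_congr rfl fun x _ => ?_
    by_cases hx : ν x = 0
    · have hpx : p x = 0 := by simp [hpdef, hx]
      simp [hx, hpx]
    · have hpx := hpne x hx
      simp only [hx, ne_eq, not_false_iff, if_true, hgdef]
      simp only [hpdef] at hpx ⊢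
      rw [div_pow, sq ((ν x).toReal), ← mul_div_assoc, mul_div_mul_left _ _ hpx]
  have hg0 : ∀ x, 0 ≤ g x := fun x => div_nonneg ENNReal.toReal_nonneg ENNReal.toReal_nonneg
  have hgB' : ∀ x, ν x ≠ 0 → g x ≤ B := by
    intro x hx
    exact le_csSup ((Set.toFinite _).bddAbove) ⟨x, hx, rfl⟩
  have hB1 : 1 ≤ B := by
    calc (1:ℝ) = ∑ x, p x * g x := hEg.symm
      _ ≤ ∑ x, p x * B := by
          refine Finset.sum_le_sum fun x _ => ?_
          by_cases hx : ν x = 0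
          · have hpx : p x = 0 := by simp [hpdef, hx]
            simp [hpx]
          · exact mul_le_mul_of_nonneg_left (hgB' x hx) (hp x)
      _ = B := by rw [← Finset.sum_mul, hps, one_mul]
  have hgB : ∀ x, g x ≤ B := by
    intro x
    by_cases hx : ν x = 0
    · have : g x = 0 := by simp [hgdef, hx]
      rw [this]; linarith
    · exact hgB' x hx
  set Z : X → ℝ := fun x => g x - 1 with hZdef
  have hZ1 : ∑ x, p x * Z x = 0 := by
    have : ∀ x, p x * Z x = p x * g x - p x := fun x => by simp [hZdef]; ring
    rw [Finset.sum_congr rfl (fun x _ => this x), Finset.sum_sub_distrib, hEg, hps]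
    ring
  have hZ2sum : ∑ x, p x * Z x ^ 2 = s2 := by
    have : ∀ x, p x * Z x ^ 2 = p x * g x ^ 2 - 2 * (p x * g x) + p x := fun x => by
      simp [hZdef]; ring
    rw [Finset.sum_congr rfl (fun x _ => this x), Finset.sum_add_distrib,
      Finset.sum_sub_distrib, ← Finset.mul_sum, hEg2, hEg, hps, hs2def]
    ring
  have hs2nonneg : 0 ≤ s2 := by
    rw [← hZ2sum]
    exact Finset.sum_nonneg fun x _ => mul_nonneg (hp x) (sq_nonneg _)
  have hZabs : ∀ x, |Z x| ≤ B := by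
    intro x
    rw [abs_le]
    constructor
    · have := hg0 x; simp only [hZdef]; linarith
    · have := hgB x; simp only [hZdef]; linarith
  have hsumZ : ∀ y : Fin m → X, (∑ i, g (y i)) - (m:ℝ) = ∑ i, Z (y i) := by
    intro y
    simp only [hZdef]
    rw [Finset.sum_sub_distrib]
    simp
  -- case m = 0
  rcases Nat.eq_zero_or_pos m with hm | hm
  · subst hm
    calc (Measure.pi fun _ : Fin 0 => ν.toMeasure) _ ≤ 1 := prob_le_one
      _ ≤ ENNReal.ofReal (2 * Real.exp (-(α ^ 2 * (0:ℕ)) / (32 * s2 + 8 / 3 * α * B))) := by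
          rw [ENNReal.one_le_ofReal]
          norm_num
  -- reduce to finite sums
  have hm' : (0:ℝ) < m := by exact_mod_cast hm
  rw [measure_pi_eq]
  have hfilter_eq : (Finset.univ.filter
        (· ∈ {Y : Fin m → X | α / 4 * m ≤ |(∑ i, g (Y i)) - m|}))
      = Finset.univ.filter (fun y : Fin m → X => α / 4 * m ≤ |(∑ i, Z (y i))|) := by
    refine Finset.filter_congr fun y _ => ?_
    simp only [Set.mem_setOf_eq, hsumZ y]
  rw [hfilter_eq]
  rcases eq_or_lt_of_le hs2nonneg with hs2 | hs2
  -- case s2 = 0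
  · have hg1 : ∀ x, ν x ≠ 0 → Z x = 0 := by
      intro x hx
      have h0 : ∑ x, p x * Z x ^ 2 = 0 := by rw [hZ2sum, ← hs2]
      have := (Finset.sum_eq_zero_iff_of_nonneg
        (fun x _ => mul_nonneg (hp x) (sq_nonneg (Z x)))).mp h0 x (Finset.mem_univ x)
      rcases mul_eq_zero.mp this with h | h
      · exact absurd h (hpne x hx)
      · exact pow_eq_zero_iff (n := 2) (by norm_num) |>.mp h
    rw [Finset.sum_eq_zero]
    · positivity
    intro y hy
    by_cases hall : ∀ i, ν (y i) ≠ 0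
    · exfalso
      have hz : (∑ i, Z (y i)) = 0 := Finset.sum_eq_zero fun i _ => hg1 (y i) (hall i)
      have hmem := (Finset.mem_filter.mp hy).2
      rw [hz] at hmem
      simp only [abs_zero] at hmem
      nlinarith
    · push_neg at hall
      obtain ⟨i, hi⟩ := hall
      exact Finset.prod_eq_zero (Finset.mem_univ i) hi
  -- main case
  have hsum_ne : (∑ y ∈ Finset.univ.filter
        (fun y : Fin m → X => α / 4 * m ≤ |(∑ i, Z (y i))|), ∏ i, ν (y i)) ≠ ⊤ :=
    ENNReal.sum_ne_top.mpr fun y _ => ENNReal.prod_ne_top fun i _ => PMF.apply_ne_top ν (y i)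
  rw [← ENNReal.ofReal_toReal hsum_ne]
  apply ENNReal.ofReal_le_ofReal
  rw [ENNReal.toReal_sum (fun y _ => ENNReal.prod_ne_top fun i _ => PMF.apply_ne_top ν (y i))]
  have hprod : ∀ y : Fin m → X, (∏ i, ν (y i)).toReal = ∏ i, p (y i) := fun y =>
    ENNReal.toReal_prod _ _
  rw [Finset.sum_congr rfl (fun y _ => hprod y)]
  -- Chernoff setup
  set t : ℝ := α / 4 * m with htdef
  set D : ℝ := m * s2 + B * t / 3 with hDdef
  set l : ℝ := t / D with hldef
  have hB0 : (0:ℝ) < B := lt_of_lt_of_le one_pos hB1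
  have ht : 0 < t := by
    rw [htdef]; positivity
  have hD : 0 < D := by
    rw [hDdef]
    have h1 : 0 < (m:ℝ) * s2 := mul_pos hm' hs2
    nlinarith
  have hl : 0 ≤ l := le_of_lt (div_pos ht hD)
  have hD' : (m:ℝ) * s2 + B * t / 3 ≠ 0 := by
    rw [hDdef] at hD; exact hD.ne'
  have hu : l * B < 3 := by
    rw [hldef, div_mul_eq_mul_div, div_lt_iff₀ hD, hDdef]
    have h1 : 0 < (m:ℝ) * s2 := mul_pos hm' hs2
    nlinarith
  have hc1 : 1 - l * B / 3 = (m * s2) / D := by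
    rw [hldef, hDdef]
    field_simp
    ring
  have hE1 := mgf_bound p Z B s2 l hp hps hZabs hZ1 hZ2sum hl hu
  have hE2 := mgf_bound p (fun x => -Z x) B s2 l hp hps
    (fun x => by rw [abs_neg]; exact hZabs x)
    (by
      have : ∀ x, p x * (-Z x) = -(p x * Z x) := fun x => by ring
      rw [Finset.sum_congr rfl (fun x _ => this x), Finset.sum_neg_distrib, hZ1, neg_zero])
    (by
      have : ∀ x, p x * (-Z x) ^ 2 = p x * Z x ^ 2 := fun x => by ring
      rw [Finset.sum_congr rfl (fun x _ => this x), hZ2sum])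
    hl hu
  -- split the absolute value
  have hsub : Finset.univ.filter (fun y : Fin m → X => α / 4 * m ≤ |(∑ i, Z (y i))|)
      ⊆ Finset.univ.filter (fun y : Fin m → X => t ≤ ∑ i, Z (y i))
        ∪ Finset.univ.filter (fun y : Fin m → X => t ≤ ∑ i, (fun x => -Z x) (y i)) := by
    intro y hy
    have hmem := (Finset.mem_filter.mp hy).2
    rw [← htdef] at hmem
    rcases le_abs.mp hmem with h | h
    · exact Finset.mem_union_left _ (Finset.mem_filter.mpr ⟨Finset.mem_univ y, h⟩)
    · refine Finset.mem_union_right _ (Finset.mem_filter.mpr ⟨Finset.mem_univ y, ?_⟩)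
      rw [Finset.sum_neg_distrib]
      linarith
  have hw0 : ∀ y : Fin m → X, 0 ≤ ∏ i, p (y i) :=
    fun y => Finset.prod_nonneg fun i _ => hp (y i)
  have hms2 : (m:ℝ) * s2 ≠ 0 := (mul_pos hm' hs2).ne'
  have hden : (0:ℝ) < 32 * s2 + 8 / 3 * α * B := by nlinarith
  have hexp_eq : -(l * t) + m * (l ^ 2 * s2 / (2 * (1 - l * B / 3)))
      = -(α ^ 2 * m) / (32 * s2 + 8 / 3 * α * B) := by
    have e1 : -(l * t) + m * (l ^ 2 * s2 / (2 * (1 - l * B / 3))) = -(t ^ 2 / (2 * D)) := by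
      rw [hc1, hldef]
      field_simp
      ring
    have e2 : t ^ 2 / (2 * D) = α ^ 2 * m / (32 * s2 + 8 / 3 * α * B) := by
      rw [div_eq_div_iff (by linarith) hden.ne', hDdef, htdef]
      ring
    rw [e1, neg_div]
    exact congrArg Neg.neg e2
  calc ∑ y ∈ Finset.univ.filter (fun y : Fin m → X => α / 4 * m ≤ |(∑ i, Z (y i))|),
        ∏ i, p (y i)
      ≤ ∑ y ∈ (Finset.univ.filter (fun y : Fin m → X => t ≤ ∑ i, Z (y i))
          ∪ Finset.univ.filter (fun y : Fin m → X => t ≤ ∑ i, (fun x => -Z x) (y i))),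
          ∏ i, p (y i) :=
        Finset.sum_le_sum_of_subset_of_nonneg hsub (fun y _ _ => hw0 y)
    _ ≤ (∑ y ∈ Finset.univ.filter (fun y : Fin m → X => t ≤ ∑ i, Z (y i)), ∏ i, p (y i))
        + ∑ y ∈ Finset.univ.filter (fun y : Fin m → X => t ≤ ∑ i, (fun x => -Z x) (y i)),
            ∏ i, p (y i) := by
        have h := Finset.sum_union_inter
          (s₁ := Finset.univ.filter (fun y : Fin m → X => t ≤ ∑ i, Z (y i)))
          (s₂ := Finset.univ.filter (fun y : Fin m → X => t ≤ ∑ i, (fun x => -Z x) (y i)))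
          (f := fun y => ∏ i, p (y i))
        have h2 : 0 ≤ ∑ y ∈ (Finset.univ.filter (fun y : Fin m → X => t ≤ ∑ i, Z (y i))
            ∩ Finset.univ.filter (fun y : Fin m → X => t ≤ ∑ i, (fun x => -Z x) (y i))),
            ∏ i, p (y i) := Finset.sum_nonneg fun y _ => hw0 y
        linarith
    _ ≤ Real.exp (-(l * t)) * (∑ x, p x * Real.exp (l * Z x)) ^ m
        + Real.exp (-(l * t)) * (∑ x, p x * Real.exp (l * (-Z x))) ^ m :=
        add_le_add (chernoff m p Z hp t l hl) (chernoff m p (fun x => -Z x) hp t l hl)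
    _ ≤ Real.exp (-(l * t)) * (Real.exp (l ^ 2 * s2 / (2 * (1 - l * B / 3)))) ^ m
        + Real.exp (-(l * t)) * (Real.exp (l ^ 2 * s2 / (2 * (1 - l * B / 3)))) ^ m := by
        have hs1 : 0 ≤ ∑ x, p x * Real.exp (l * Z x) :=
          Finset.sum_nonneg fun x _ => mul_nonneg (hp x) (Real.exp_nonneg _)
        have hs2' : 0 ≤ ∑ x, p x * Real.exp (l * -Z x) :=
          Finset.sum_nonneg fun x _ => mul_nonneg (hp x) (Real.exp_nonneg _)
        exact add_le_add
          (mul_le_mul_of_nonneg_left (pow_le_pow_left₀ hs1 hE1 m) (Real.exp_nonneg _))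
          (mul_le_mul_of_nonneg_left (pow_le_pow_left₀ hs2' hE2 m) (Real.exp_nonneg _))
    _ = 2 * Real.exp (-(α ^ 2 * m) / (32 * s2 + 8 / 3 * α * B)) := by
        rw [← Real.exp_nat_mul, ← Real.exp_add, hexp_eq]
        ring
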